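/- Let μ̃ > 0, σ > 0, R ≥ 1, π̄ > 0, and let μ_a > 0 and μ_b be reals with μ_b > μ_a². On the interval I := (0, μ_a/(R(μ_b − μ_a²))) define h(x) := (μ̃/(σ² x)) · (μ_a − R x (μ_b − μ_a²)) / (μ_b + (μ̃/σ)²(μ_b − μ_a²)) − π̄. Then h is strictly decreasing on I, h(x) → +∞ as x → 0⁺, h(x) → −π̄ as x → μ_a/(R(μ_b − μ_a²)) from the left, and there exists a unique x ∈ I with h(x) = 0. -/

import Mathlib

/-- The backward-induction function
h(x) = (μ̃/(σ²x))·(μ_a − Rx(μ_b − μ_a²))/(μ_b + (μ̃/σ)²(μ_b − μ_a²)) − π̄ is strictly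
decreasing on I = (0, μ_a/(R(μ_b − μ_a²))), tends to +∞ at 0⁺, tends to −π̄ at the right
endpoint, and has a unique zero in I. -/
theorem implied_risk_aversion_unique
    (μt σ R pb μa μb : ℝ)
    (hμt : 0 < μt) (hσ : 0 < σ) (hR : 1 ≤ R) (hpb : 0 < pb)
    (hμa : 0 < μa) (hμb : μa^2 < μb)
    (h : ℝ → ℝ)
    (hh : ∀ x, h x = μt/(σ^2*x) * ((μa - R*x*(μb - μa^2))
        / (μb + (μt/σ)^2*(μb - μa^2))) - pb) :
    StrictAntiOn h (Set.Ioo 0 (μa/(R*(μb - μa^2)))) ∧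
    Filter.Tendsto h (nhdsWithin 0 (Set.Ioi 0)) Filter.atTop ∧
    Filter.Tendsto h (nhdsWithin (μa/(R*(μb - μa^2))) (Set.Iio (μa/(R*(μb - μa^2)))))
      (nhds (-pb)) ∧
    ∃! x, x ∈ Set.Ioo 0 (μa/(R*(μb - μa^2))) ∧ h x = 0 := by
  have hD : 0 < μb - μa^2 := sub_pos.mpr hμb
  have hμbp : 0 < μb := lt_trans (by positivity) hμb
  have hRpos : 0 < R := lt_of_lt_of_le one_pos hR
  have hE : 0 < μb + (μt/σ)^2*(μb - μa^2) := by positivity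
  set E := μb + (μt/σ)^2*(μb - μa^2) with hEdef
  set c := μt/(σ^2*E) with hcdef
  have hc : 0 < c := by positivity
  have hRD : 0 < R*(μb - μa^2) := by positivity
  have hx0 : 0 < μa/(R*(μb - μa^2)) := by positivity
  have key : ∀ x : ℝ, x ≠ 0 → h x = c*μa/x - (c*(R*(μb - μa^2))+pb) := by
    intro x hx
    rw [hh, hcdef]
    field_simp
    ring
  have hanti : StrictAntiOn h (Set.Ioo 0 (μa/(R*(μb - μa^2)))) := by
    intro x hx y hy hxy
    rw [key x (ne_of_gt hx.1), key y (ne_of_gt (lt_trans hx.1 hxy))]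
    have : c*μa/y < c*μa/x := div_lt_div_of_pos_left (by positivity) hx.1 hxy
    linarith
  refine ⟨hanti, ?_, ?_, ?_⟩
  · have h1 : Filter.Tendsto (fun x : ℝ => c*μa/x - (c*(R*(μb - μa^2))+pb))
        (nhdsWithin 0 (Set.Ioi 0)) Filter.atTop := by
      apply Filter.tendsto_atTop_add_const_right
      have : Filter.Tendsto (fun x : ℝ => (c*μa) * x⁻¹) (nhdsWithin 0 (Set.Ioi 0))
          Filter.atTop :=
        Filter.Tendsto.const_mul_atTop (by positivity) tendsto_inv_nhdsGT_zero
      exact this.congr (fun x => (div_eq_mul_inv _ _).symm)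
    refine h1.congr' ?_
    filter_upwards [self_mem_nhdsWithin] with x hx
    exact (key x (ne_of_gt hx)).symm
  · have h1 : Filter.Tendsto (fun x : ℝ => c*μa/x - (c*(R*(μb - μa^2))+pb))
        (nhdsWithin (μa/(R*(μb - μa^2))) (Set.Iio (μa/(R*(μb - μa^2))))) (nhds (-pb)) := by
      have hcont : ContinuousAt (fun x : ℝ => c*μa/x - (c*(R*(μb - μa^2))+pb))
          (μa/(R*(μb - μa^2))) := by
        apply ContinuousAt.sub _ continuousAt_const
        exact ContinuousAt.div continuousAt_const continuousAt_id (ne_of_gt hx0)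
      have hval : c*μa/(μa/(R*(μb - μa^2))) - (c*(R*(μb - μa^2))+pb) = -pb := by
        have hμa' : μa ≠ 0 := ne_of_gt hμa
        have hRD' : R*(μb - μa^2) ≠ 0 := ne_of_gt hRD
        field_simp
        ring
      have := hcont.continuousWithinAt (s := Set.Iio (μa/(R*(μb - μa^2))))
      rw [ContinuousWithinAt, hval] at this
      exact this
    refine h1.congr' ?_
    have hmem : Set.Ioi (0:ℝ) ∈ nhdsWithin (μa/(R*(μb - μa^2)))
        (Set.Iio (μa/(R*(μb - μa^2)))) :=
      nhdsWithin_le_nhds (Ioi_mem_nhds hx0)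
    filter_upwards [hmem] with x hx
    exact (key x (ne_of_gt hx)).symm
  · set K := c*(R*(μb - μa^2))+pb with hKdef
    have hK : 0 < K := by positivity
    refine ⟨c*μa/K, ⟨⟨by positivity, ?_⟩, ?_⟩, ?_⟩
    · have h1 : c*μa/K < c*μa/(c*(R*(μb - μa^2))) :=
        div_lt_div_of_pos_left (by positivity) (by positivity) (by rw [hKdef]; linarith)
      have h2 : c*μa/(c*(R*(μb - μa^2))) = μa/(R*(μb - μa^2)) :=
        mul_div_mul_left _ _ (ne_of_gt hc)
      linarith
    · rw [key _ (by positivity)]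
      field_simp
      ring
    · rintro y ⟨hy, hy0⟩
      have hxmem : c*μa/K ∈ Set.Ioo 0 (μa/(R*(μb - μa^2))) := by
        constructor
        · positivity
        · have h1 : c*μa/K < c*μa/(c*(R*(μb - μa^2))) :=
            div_lt_div_of_pos_left (by positivity) (by positivity) (by rw [hKdef]; linarith)
          have h2 : c*μa/(c*(R*(μb - μa^2))) = μa/(R*(μb - μa^2)) :=
            mul_div_mul_left _ _ (ne_of_gt hc)
          linarith
      have hxz : h (c*μa/K) = 0 := by
        rw [key _ (by positivity)]; field_simp; ring
      exact hanti.injOn hy hxmem (by rw [hy0, hxz])
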